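/- For every integer n ≥ 1, the following polynomial identity in the variable y over ℚ holds: ∑_{r=2}^{n+1} (1/r) C(n-1, r-2) · binom(y, r-1) = (1/(y+1)) · binom(y+n, n+1), where the right-hand side is the polynomial (y+n)(y+n−1)⋯(y+2)/(n+1)!. -/

import Mathlib

/-- The generalized binomial coefficient `binom(y, k) = y(y−1)⋯(y−k+1)/k!`. -/
def binomQ (y : ℚ) (k : ℕ) : ℚ := (∏ i ∈ Finset.range k, (y - (i : ℚ))) / (k.factorial : ℚ)

/-- The polynomial `binom(y+n, n+1)/(y+1)`, i.e. `y(y+2)(y+3)⋯(y+n)/(n+1)!`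
(the result of dividing the generalized binomial coefficient `binom(y+n, n+1)`
through by its factor `y+1`). -/
def binomDiv (n : ℕ) (y : ℚ) : ℚ :=
  y * (∏ i ∈ Finset.range (n - 1), (y + (i : ℚ) + 2)) / ((n + 1).factorial : ℚ)

-- Pascal's rule for binomQ
lemma binomQ_pascal (x : ℚ) (k : ℕ) :
    binomQ (x + 1) (k + 1) = binomQ x (k + 1) + binomQ x k := by
  unfold binomQ
  rw [Finset.prod_range_succ' (fun i => x + 1 - (i : ℚ)), Finset.prod_range_succ (fun i => x - (i : ℚ))]
  have h1 : ∀ i : ℕ, x + 1 - ((i : ℚ) + 1) = x - i := by intro i; ring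
  simp only [Nat.cast_add, Nat.cast_one, h1]
  have hf : ((k + 1).factorial : ℚ) = (k + 1) * k.factorial := by
    rw [Nat.factorial_succ]; push_cast; ring
  have h2 : (k.factorial : ℚ) ≠ 0 := Nat.cast_ne_zero.mpr k.factorial_ne_zero
  have h3 : ((k : ℚ) + 1) ≠ 0 := by positivity
  rw [hf]
  field_simp
  ring

-- Vandermonde-type lemma
lemma binomQ_vdm : ∀ (m : ℕ) (a : ℕ) (x : ℚ),
    ∑ k ∈ Finset.range (m + 1), (m.choose k : ℚ) * binomQ x (k + a) = binomQ (x + m) (m + a) := by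
  intro m
  induction m with
  | zero => intro a x; simp
  | succ m ih =>
    intro a x
    rw [Finset.sum_range_succ' (fun k => ((m+1).choose k : ℚ) * binomQ x (k + a))]
    have hsplit : ∀ k, (((m+1).choose (k+1) : ℕ) : ℚ) = (m.choose k : ℚ) + (m.choose (k+1) : ℚ) := by
      intro k; rw [Nat.choose_succ_succ]; push_cast; ring
    simp only [hsplit]
    have h1 : ∑ k ∈ Finset.range (m + 1), ((m.choose k : ℚ) + (m.choose (k+1) : ℚ)) * binomQ x (k + 1 + a)
        = ∑ k ∈ Finset.range (m + 1), (m.choose k : ℚ) * binomQ x (k + (a+1))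
          + ∑ k ∈ Finset.range (m + 1), (m.choose (k+1) : ℚ) * binomQ x (k + 1 + a) := by
      rw [← Finset.sum_add_distrib]
      apply Finset.sum_congr rfl
      intro k _
      have : k + 1 + a = k + (a + 1) := by ring
      rw [this]; ring
    rw [h1]
    have h2 : ∑ k ∈ Finset.range (m + 1), (m.choose (k+1) : ℚ) * binomQ x (k + 1 + a)
        + ((m+1).choose 0 : ℚ) * binomQ x (0 + a)
        = ∑ k ∈ Finset.range (m + 1), (m.choose k : ℚ) * binomQ x (k + a) := by
      have e1 : ∑ k ∈ Finset.range (m + 2), (m.choose k : ℚ) * binomQ x (k + a)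
          = ∑ k ∈ Finset.range (m + 1), (m.choose (k+1) : ℚ) * binomQ x (k + 1 + a)
            + ((m+1).choose 0 : ℚ) * binomQ x (0 + a) := by
        rw [Finset.sum_range_succ' (fun k => (m.choose k : ℚ) * binomQ x (k + a))]
        simp
      have e2 : ∑ k ∈ Finset.range (m + 2), (m.choose k : ℚ) * binomQ x (k + a)
          = ∑ k ∈ Finset.range (m + 1), (m.choose k : ℚ) * binomQ x (k + a) := by
        rw [Finset.sum_range_succ]
        simp [Nat.choose_succ_self]
      rw [← e1, e2]
    rw [add_assoc, h2, ih (a+1) x, ih a x]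
    have hx : x + ((m : ℚ) + 1) = (x + m) + 1 := by ring
    have hcast : ((m + 1 : ℕ) : ℚ) = (m : ℚ) + 1 := by push_cast; ring
    rw [hcast, hx]
    have : m + 1 + a = (m + a) + 1 := by ring
    rw [this, binomQ_pascal (x + m) (m + a)]
    have : m + (a+1) = (m + a) + 1 := by ring
    rw [this]

-- absorb (y+1)/(k+2) into binomQ
lemma binomQ_step (y : ℚ) (k : ℕ) :
    (y + 1) * ((1 / ((k : ℚ) + 2)) * binomQ y (k + 1)) = binomQ (y + 1) (k + 2) := by
  unfold binomQ
  rw [Finset.prod_range_succ' (fun i => y + 1 - (i : ℚ))]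
  have h1 : ∀ i : ℕ, y + 1 - ((i : ℚ) + 1) = y - i := by intro i; ring
  simp only [Nat.cast_add, Nat.cast_one, h1, Nat.cast_zero]
  have hf : ((k + 2).factorial : ℚ) = ((k : ℚ) + 2) * (k + 1).factorial := by
    rw [show k + 2 = (k + 1) + 1 from rfl, Nat.factorial_succ]; push_cast; ring
  have h2 : ((k+1).factorial : ℚ) ≠ 0 := Nat.cast_ne_zero.mpr (k+1).factorial_ne_zero
  have h3 : ((k : ℚ) + 2) ≠ 0 := by positivity
  rw [hf]
  field_simp
  ring

-- reversed product
lemma prod_rev (m : ℕ) (y : ℚ) :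
    ∏ i ∈ Finset.range (m + 2), (y + (m : ℚ) + 1 - (i : ℚ))
      = y * (y + 1) * ∏ i ∈ Finset.range m, (y + (i : ℚ) + 2) := by
  induction m with
  | zero => simp [Finset.prod_range_succ]; ring
  | succ m ih =>
    rw [show m + 1 + 2 = (m + 2) + 1 from rfl,
      Finset.prod_range_succ' (fun i => y + ((m + 1 : ℕ) : ℚ) + 1 - (i : ℚ))]
    have h1 : ∀ i : ℕ, y + ((m : ℚ) + 1) + 1 - ((i : ℚ) + 1) = y + (m:ℚ) + 1 - i := by
      intro i; push_cast; ring
    simp only [Nat.cast_add, Nat.cast_one, h1, Nat.cast_zero]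
    rw [ih, Finset.prod_range_succ]
    push_cast
    ring

-- (y+1) * binomDiv = binomQ (y+n) (n+1)
lemma binomDiv_mul (n : ℕ) (hn : 1 ≤ n) (y : ℚ) :
    (y + 1) * binomDiv n y = binomQ (y + n) (n + 1) := by
  obtain ⟨m, rfl⟩ := Nat.exists_eq_add_of_le hn
  unfold binomDiv binomQ
  have h1 : ∀ i : ℕ, y + ((1 + m : ℕ) : ℚ) - (i : ℚ) = y + (m : ℚ) + 1 - i := by
    intro i; push_cast; ring
  have h2 : 1 + m + 1 = m + 2 := by ring
  have h3 : 1 + m - 1 = m := by omega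
  simp only [h1, h2, h3]
  rw [prod_rev m y]
  have h4 : ((m + 2).factorial : ℚ) ≠ 0 := Nat.cast_ne_zero.mpr (m+2).factorial_ne_zero
  field_simp

lemma key (n : ℕ) (hn : 1 ≤ n) (y : ℚ) :
    (y + 1) * (∑ r ∈ Finset.Icc 2 (n + 1),
        (1 / (r : ℚ)) * ((n - 1).choose (r - 2) : ℚ) * binomQ y (r - 1))
      = (y + 1) * binomDiv n y := by
  obtain ⟨m, rfl⟩ : ∃ m, n = m + 1 := ⟨n - 1, by omega⟩
  rw [binomDiv_mul (m + 1) hn y, Finset.mul_sum]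
  rw [show Finset.Icc 2 (m + 1 + 1) = Finset.Ico 2 (m + 1 + 2) by rw [← Finset.Ico_add_one_right_eq_Icc]; rfl,
    Finset.sum_Ico_eq_sum_range]
  have h2 : m + 1 + 2 - 2 = m + 1 := by omega
  have h3 : m + 1 - 1 = m := by omega
  rw [h2, h3]
  have hterm : ∀ k ∈ Finset.range (m + 1),
      (y + 1) * ((1 / ((2 + k : ℕ) : ℚ)) * (m.choose (2 + k - 2) : ℚ) * binomQ y (2 + k - 1))
        = (m.choose k : ℚ) * binomQ (y + 1) (k + 2) := by
    intro k _
    have e1 : 2 + k - 2 = k := by omega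
    have e2 : 2 + k - 1 = k + 1 := by omega
    have e3 : ((2 + k : ℕ) : ℚ) = (k : ℚ) + 2 := by push_cast; ring
    rw [e1, e2, e3, ← binomQ_step y k]
    ring
  rw [Finset.sum_congr rfl hterm, binomQ_vdm m 2 (y + 1)]
  have e5 : y + 1 + (m : ℚ) = y + ((m + 1 : ℕ) : ℚ) := by push_cast; ring
  rw [show m + 2 = m + 1 + 1 from rfl, e5]

noncomputable def lhsPoly (n : ℕ) : Polynomial ℚ :=
  ∑ r ∈ Finset.Icc 2 (n + 1),
    Polynomial.C ((1 / (r : ℚ)) * ((n - 1).choose (r - 2) : ℚ) * (((r - 1).factorial : ℚ))⁻¹)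
      * ∏ i ∈ Finset.range (r - 1), (Polynomial.X - Polynomial.C (i : ℚ))

noncomputable def rhsPoly (n : ℕ) : Polynomial ℚ :=
  Polynomial.C (((n + 1).factorial : ℚ))⁻¹
    * (Polynomial.X * ∏ i ∈ Finset.range (n - 1), (Polynomial.X + Polynomial.C (i : ℚ) + Polynomial.C 2))

lemma eval_lhsPoly (n : ℕ) (y : ℚ) :
    (lhsPoly n).eval y
      = ∑ r ∈ Finset.Icc 2 (n + 1),
          (1 / (r : ℚ)) * ((n - 1).choose (r - 2) : ℚ) * binomQ y (r - 1) := by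
  unfold lhsPoly
  rw [Polynomial.eval_finset_sum]
  refine Finset.sum_congr rfl fun r _ => ?_
  simp [Polynomial.eval_prod, binomQ, div_eq_mul_inv]
  ring

lemma eval_rhsPoly (n : ℕ) (y : ℚ) : (rhsPoly n).eval y = binomDiv n y := by
  unfold rhsPoly binomDiv
  simp [Polynomial.eval_prod, div_eq_mul_inv]
  ring

/-- For every integer `n ≥ 1`, as a polynomial identity in `y` over `ℚ`:
`∑_{r=2}^{n+1} (1/r) C(n-1,r-2) binom(y,r-1) = (1/(y+1)) binom(y+n, n+1)`. -/
theorem binomial_sum_eval_identity (n : ℕ) (hn : 1 ≤ n) (y : ℚ) :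
    ∑ r ∈ Finset.Icc 2 (n + 1),
        (1 / (r : ℚ)) * ((n - 1).choose (r - 2) : ℚ) * binomQ y (r - 1) =
      binomDiv n y := by
  have hpoly : (Polynomial.X + Polynomial.C (1 : ℚ)) * lhsPoly n
      = (Polynomial.X + Polynomial.C (1 : ℚ)) * rhsPoly n := by
    apply Polynomial.funext
    intro z
    rw [Polynomial.eval_mul, Polynomial.eval_mul, Polynomial.eval_add, Polynomial.eval_X,
      Polynomial.eval_C, eval_lhsPoly, eval_rhsPoly]
    exact key n hn z
  have hX : (Polynomial.X + Polynomial.C (1 : ℚ)) ≠ 0 := Polynomial.X_add_C_ne_zero 1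
  have h := mul_left_cancel₀ hX hpoly
  have := congrArg (Polynomial.eval y) h
  rwa [eval_lhsPoly, eval_rhsPoly] at this
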